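/- Let p be a rank one projection in a complex semisimple unital Banach algebra A and let J_p be the ideal it generates. Then any two minimal left ideals of A contained in J_p are isomorphic as (non-unital) Banach algebras; in particular, for any rank one projection q ∈ J_p, the map T_q : Ap → Aq given by T_q(xp) = v x p v⁻¹, where q = v p v⁻¹ with v ∈ G₁(A), is a continuous algebra isomorphism. -/

import Mathlib

noncomputable section

/-- A rank one (minimal) projection: a nonzero idempotent `p` with `p A p = ℂ p`. -/
def IsMinimalProjection {A : Type*} [Ring A] [Algebra ℂ A] (p : A) : Prop :=
  p ≠ 0 ∧ IsIdempotentElem p ∧ ∀ a : A, ∃ c : ℂ, p * a * p = c • p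

/-- The two-sided ideal generated by `p`: finite sums `∑ xᵢ p yᵢ`. -/
def idealGen {A : Type*} [Ring A] (p : A) : Set A :=
  {a | ∃ (n : ℕ) (x y : Fin n → A), a = ∑ i, x i * p * y i}

section Aux

variable {A : Type*} [NormedRing A] [NormedAlgebra ℂ A]

/-- The unit `1 + n` for a square-zero element `n`. -/
def sqUnit (n : A) (h : n * n = 0) : Aˣ :=
  ⟨1 + n, 1 - n,
    by have e : (1 + n) * (1 - n) = 1 - n * n := by noncomm_ring
       rw [e, h, sub_zero],
    by have e : (1 - n) * (1 + n) = 1 - n * n := by noncomm_ring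
       rw [e, h, sub_zero]⟩

lemma sqUnit_joined (n : A) (h : n * n = 0) : Joined (1 : Aˣ) (sqUnit n h) := by
  have key : ∀ z : ℂ, (z • n) * (z • n) = 0 := by
    intro z
    rw [smul_mul_assoc, mul_smul_comm, h, smul_zero, smul_zero]
  refine ⟨⟨⟨fun r => sqUnit (((r : ℝ) : ℂ) • n) (key _), ?_⟩, ?_, ?_⟩⟩
  · rw [Units.continuous_iff]
    constructor
    · exact continuous_const.add
        ((Complex.continuous_ofReal.comp continuous_subtype_val).smul continuous_const)
    · exact continuous_const.sub
        ((Complex.continuous_ofReal.comp continuous_subtype_val).smul continuous_const)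
  · apply Units.ext
    simp [sqUnit]
  · apply Units.ext
    simp [sqUnit]

lemma joined_one_mul {u w : Aˣ} (hu : Joined (1 : Aˣ) u) (hw : Joined (1 : Aˣ) w) :
    Joined (1 : Aˣ) (u * w) := by
  obtain ⟨γ₁⟩ := hu
  obtain ⟨γ₂⟩ := hw
  exact ⟨⟨⟨fun r => γ₁ r * γ₂ r, γ₁.continuous.mul γ₂.continuous⟩,
    by simp, by simp⟩⟩

end Aux

/-- Any minimal left ideal `Aq` contained in `J_p` is isomorphic to `Ap` as a Banach
algebra via `T_q (x p) = v (x p) v⁻¹` where `q = v p v⁻¹`, `v ∈ G₁(A)`. -/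
theorem minimal_left_ideals_in_idealGen_isomorphic {A : Type*} [NormedRing A]
    [NormedAlgebra ℂ A] [CompleteSpace A]
    (hss : ∀ a : A, (∀ x : A, spectrum ℂ (a * x) ⊆ {0}) → a = 0)
    (p q : A) (hp : IsMinimalProjection p) (hq : IsMinimalProjection q)
    (hqJ : q ∈ idealGen p) :
    ∃ v : Aˣ, v ∈ connectedComponent (1 : Aˣ) ∧ q = (v : A) * p * ((v⁻¹ : Aˣ) : A) ∧
      Continuous (fun x : A => (v : A) * x * ((v⁻¹ : Aˣ) : A)) ∧
      (∀ x y : A, (v : A) * (x * y) * ((v⁻¹ : Aˣ) : A) =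
        ((v : A) * x * ((v⁻¹ : Aˣ) : A)) * ((v : A) * y * ((v⁻¹ : Aˣ) : A))) ∧
      Set.BijOn (fun x : A => (v : A) * x * ((v⁻¹ : Aˣ) : A))
        {y | ∃ z : A, y = z * p} {y | ∃ z : A, y = z * q} := by
  obtain ⟨hp0, hpp, hpmin⟩ := hp
  obtain ⟨hq0, hqq, hqmin⟩ := hq
  rw [IsIdempotentElem] at hpp hqq
  -- Step 1: there are `u, w` with `q * u * p * w * q ≠ 0`.
  have key : ∃ u w : A, q * u * p * w * q ≠ 0 := by
    by_contra hcon
    push_neg at hcon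
    obtain ⟨n, x, y, hsum⟩ := hqJ
    apply hq0
    calc q = q * q * q := by rw [hqq, hqq]
      _ = q * (∑ i, x i * p * y i) * q := by rw [← hsum]
      _ = ∑ i, q * (x i * p * y i) * q := by rw [Finset.mul_sum, Finset.sum_mul]
      _ = 0 := by
          refine Finset.sum_eq_zero fun i _ => ?_
          have e : q * (x i * p * y i) * q = q * x i * p * y i * q := by noncomm_ring
          rw [e]
          exact hcon (x i) (y i)
  obtain ⟨u, w, huv⟩ := key
  obtain ⟨c, hc⟩ := hqmin (u * p * w)
  have hc' : q * u * p * w * q = c • q := by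
    rw [← hc]; noncomm_ring
  have hc0 : c ≠ 0 := by
    intro h
    apply huv
    rw [hc', h, zero_smul]
  -- Step 2: build `a ∈ qAp`, `b ∈ pAq` with `a*b = q`, `b*a = p`.
  obtain ⟨a, b, hqa, hap, hpb, hbq, hab, hba⟩ :
      ∃ a b : A, q * a = a ∧ a * p = a ∧ p * b = b ∧ b * q = b ∧ a * b = q ∧ b * a = p := by
    have hqa : q * (c⁻¹ • (q * u * p)) = c⁻¹ • (q * u * p) := by
      rw [mul_smul_comm]
      congr 1
      calc q * (q * u * p) = (q * q) * u * p := by noncomm_ring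
        _ = q * u * p := by rw [hqq]
    have hap : (c⁻¹ • (q * u * p)) * p = c⁻¹ • (q * u * p) := by
      rw [smul_mul_assoc]
      congr 1
      calc q * u * p * p = q * u * (p * p) := by noncomm_ring
        _ = q * u * p := by rw [hpp]
    have hpb : p * (p * w * q) = p * w * q := by
      calc p * (p * w * q) = (p * p) * w * q := by noncomm_ring
        _ = p * w * q := by rw [hpp]
    have hbq : (p * w * q) * q = p * w * q := by
      calc p * w * q * q = p * w * (q * q) := by noncomm_ring
        _ = p * w * q := by rw [hqq]
    have hab : (c⁻¹ • (q * u * p)) * (p * w * q) = q := by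
      rw [smul_mul_assoc]
      have e : q * u * p * (p * w * q) = q * u * p * w * q := by
        calc q * u * p * (p * w * q) = q * u * (p * p) * w * q := by noncomm_ring
          _ = q * u * p * w * q := by rw [hpp]
      rw [e, hc', smul_smul, inv_mul_cancel₀ hc0, one_smul]
    have hba : (p * w * q) * (c⁻¹ • (q * u * p)) = p := by
      obtain ⟨d, hd⟩ := hpmin (w * q * u)
      have hba' : (p * w * q) * (c⁻¹ • (q * u * p)) = (c⁻¹ * d) • p := by
        rw [mul_smul_comm]
        have e1 : p * w * q * (q * u * p) = p * (w * q * u) * p := by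
          calc p * w * q * (q * u * p) = p * w * (q * q) * u * p := by noncomm_ring
            _ = p * w * q * u * p := by rw [hqq]
            _ = p * (w * q * u) * p := by noncomm_ring
        rw [e1, hd, smul_smul]
      have hq_eq : q = (c⁻¹ * d) • q := by
        calc q = q * q := hqq.symm
          _ = ((c⁻¹ • (q * u * p)) * (p * w * q)) * ((c⁻¹ • (q * u * p)) * (p * w * q)) := by
              rw [hab]
          _ = (c⁻¹ • (q * u * p)) * ((p * w * q) * (c⁻¹ • (q * u * p))) * (p * w * q) := by
              noncomm_ring
          _ = (c⁻¹ • (q * u * p)) * ((c⁻¹ * d) • p) * (p * w * q) := by rw [hba']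
          _ = (c⁻¹ * d) • ((c⁻¹ • (q * u * p)) * (p * (p * w * q))) := by
              rw [mul_smul_comm, smul_mul_assoc, mul_assoc]
          _ = (c⁻¹ * d) • ((c⁻¹ • (q * u * p)) * (p * w * q)) := by rw [hpb]
          _ = (c⁻¹ * d) • q := by rw [hab]
      have hd1 : (c⁻¹ * d) = 1 := by
        by_contra hne
        have hz : ((c⁻¹ * d) - 1) • q = 0 := by
          rw [sub_smul, one_smul, ← hq_eq, sub_self]
        have hne' : (c⁻¹ * d) - 1 ≠ 0 := sub_ne_zero.mpr hne
        apply absurd _ hq0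
        have h2 := congrArg (fun x : A => ((c⁻¹ * d) - 1)⁻¹ • x) hz
        simpa [smul_smul, inv_mul_cancel₀ hne'] using h2
      rw [hba', hd1, one_smul]
    exact ⟨c⁻¹ • (q * u * p), p * w * q, hqa, hap, hpb, hbq, hab, hba⟩
  -- Step 3: the structure scalars s and t.
  obtain ⟨s, hs⟩ := hqmin a
  obtain ⟨t, ht⟩ := hpmin b
  have haq : a * q = s • q := by
    calc a * q = (q * a) * q := by rw [hqa]
      _ = s • q := hs
  have haa : a * a = s • a := by
    calc a * a = a * (q * a) := by rw [hqa]
      _ = (a * q) * a := by rw [mul_assoc]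
      _ = (s • q) * a := by rw [haq]
      _ = s • a := by rw [smul_mul_assoc, hqa]
  have hpa : p * a = s • p := by
    calc p * a = b * (a * a) := by rw [← mul_assoc, hba]
      _ = s • (b * a) := by rw [haa, mul_smul_comm]
      _ = s • p := by rw [hba]
  have hbp : b * p = t • p := by
    calc b * p = (p * b) * p := by rw [hpb]
      _ = t • p := ht
  have hbb : b * b = t • b := by
    calc b * b = b * (p * b) := by rw [hpb]
      _ = (b * p) * b := by rw [mul_assoc]
      _ = (t • p) * b := by rw [hbp]
      _ = t • b := by rw [smul_mul_assoc, hpb]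
  have hqb : q * b = t • q := by
    calc q * b = a * (b * b) := by rw [← mul_assoc, hab]
      _ = t • (a * b) := by rw [hbb, mul_smul_comm]
      _ = t • q := by rw [hab]
  have hpq : p * q = s • b := by
    calc p * q = b * (a * q) := by rw [← mul_assoc, hba]
      _ = s • (b * q) := by rw [haq, mul_smul_comm]
      _ = s • b := by rw [hbq]
  have hqp : q * p = t • a := by
    calc q * p = a * (b * p) := by rw [← mul_assoc, hab]
      _ = t • (a * p) := by rw [hbp, mul_smul_comm]
      _ = t • a := by rw [hap]
  -- Step 4: square-zero `n₁ n₂` with `(1+n₁)(1+n₂) p = q (1+n₁)(1+n₂)`.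
  have main : ∃ (n₁ n₂ : A) (h₁ : n₁ * n₁ = 0) (h₂ : n₂ * n₂ = 0),
      ((1 + n₁) * (1 + n₂)) * p = q * ((1 + n₁) * (1 + n₂)) := by
    by_cases htz : t = 0
    · by_cases hsz : s = 0
      · -- case s = t = 0
        rw [htz, zero_smul] at hbp hbb hqb hqp
        rw [hsz, zero_smul] at hpa haa haq hpq
        refine ⟨b + b, p + b - a - q, ?_, ?_, ?_⟩
        · simp only [add_mul, mul_add, hbb, add_zero, zero_add]
        · simp only [sub_mul, mul_sub, add_mul, mul_add, hpp, hqq, hab, hba, hqa, hap,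
            hpb, hbq, haq, haa, hpa, hbp, hbb, hqb, hpq, hqp, one_mul, mul_one, zero_mul,
            mul_zero, add_zero, zero_add, sub_zero, zero_sub, smul_zero, zero_smul, neg_zero]
          module
        · simp only [sub_mul, mul_sub, add_mul, mul_add, one_mul, mul_one, hpp, hqq,
            hab, hba, hqa, hap, hpb, hbq, haq, haa, hpa, hbp, hbb, hqb, hpq, hqp, one_mul, mul_one, zero_mul,
            mul_zero, add_zero, zero_add, sub_zero, zero_sub, smul_zero, zero_smul, neg_zero]
          module
      · -- case t = 0, s ≠ 0
        rw [htz, zero_smul] at hbp hbb hqb hqp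
        refine ⟨-(s • b), s⁻¹ • a - q, ?_, ?_, ?_⟩
        · simp only [neg_mul_neg, smul_mul_assoc, mul_smul_comm, hbb, smul_zero]
        · simp only [sub_mul, mul_sub, smul_mul_assoc, mul_smul_comm, smul_smul,
            hqq, hqa, haq, haa, zero_mul, mul_zero, add_zero, zero_add, sub_zero,
            zero_sub, smul_zero, zero_smul, neg_zero]
          match_scalars <;> field_simp <;> ring
        · simp only [sub_mul, mul_sub, add_mul, mul_add, neg_mul, mul_neg, one_mul,
            mul_one, smul_mul_assoc, mul_smul_comm, smul_smul, hpp, hqq, hab, hba,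
            hqa, hap, hpb, hbq, haq, haa, hpa, hbp, hbb, hqb, hpq, hqp, one_mul, mul_one, zero_mul,
            mul_zero, add_zero, zero_add, sub_zero, zero_sub, smul_zero, zero_smul, neg_zero]
          match_scalars <;> field_simp <;> ring
    · -- case t ≠ 0
      refine ⟨p - t⁻¹ • b, t • a - (t * s) • p, ?_, ?_, ?_⟩
      · simp only [sub_mul, mul_sub, smul_mul_assoc, mul_smul_comm, smul_smul,
          hpp, hpb, hbp, hbb, zero_mul, mul_zero, add_zero, zero_add, sub_zero,
          zero_sub, smul_zero, zero_smul, neg_zero]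
        match_scalars <;> field_simp <;> ring
      · simp only [sub_mul, mul_sub, smul_mul_assoc, mul_smul_comm, smul_smul,
          hpp, haa, hap, hpa, zero_mul, mul_zero, add_zero, zero_add, sub_zero,
          zero_sub, smul_zero, zero_smul, neg_zero]
        match_scalars <;> field_simp <;> ring
      · simp only [sub_mul, mul_sub, add_mul, mul_add, one_mul, mul_one,
          smul_mul_assoc, mul_smul_comm, smul_smul, hpp, hqq, hab, hba, hqa, hap,
          hpb, hbq, haq, haa, hpa, hbp, hbb, hqb, hpq, hqp, one_mul, mul_one, zero_mul,
            mul_zero, add_zero, zero_add, sub_zero, zero_sub, smul_zero, zero_smul, neg_zero]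
        match_scalars <;> field_simp <;> ring
  obtain ⟨n₁, n₂, h₁, h₂, hvpq⟩ := main
  refine ⟨sqUnit n₁ h₁ * sqUnit n₂ h₂, ?_, ?_, ?_, ?_, ?_⟩
  case _ =>
    exact pathComponent_subset_component _
      (joined_one_mul (sqUnit_joined n₁ h₁) (sqUnit_joined n₂ h₂))
  all_goals {
    set v : Aˣ := sqUnit n₁ h₁ * sqUnit n₂ h₂ with hv
    have hvp : (v : A) * p = q * (v : A) := hvpq
    have hq' : q = (v : A) * p * ((v⁻¹ : Aˣ) : A) := by
      rw [hvp, mul_assoc, Units.mul_inv, mul_one]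
    first
    | exact hq'
    | exact (continuous_const.mul continuous_id).mul continuous_const
    | (intro x y
       simp only [mul_assoc, Units.inv_mul_cancel_left])
    | (refine ⟨?_, ?_, ?_⟩
       · rintro y' ⟨z, rfl⟩
         refine ⟨(v : A) * z * ((v⁻¹ : Aˣ) : A), ?_⟩
         simp only
         rw [hq']
         simp only [mul_assoc, Units.inv_mul_cancel_left]
       · intro x _ y' _ hxy
         simp only at hxy
         have h2 := congrArg (fun w => ((v⁻¹ : Aˣ) : A) * w * (v : A)) hxy
         simpa [mul_assoc, Units.inv_mul_cancel_left, Units.inv_mul] using h2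
       · rintro y' ⟨z, rfl⟩
         refine ⟨((v⁻¹ : Aˣ) : A) * (z * q) * (v : A), ⟨((v⁻¹ : Aˣ) : A) * z * (v : A), ?_⟩, ?_⟩
         · rw [hq']
           simp only [mul_assoc, Units.inv_mul_cancel_left, Units.inv_mul, mul_one]
         · simp only
           simp only [mul_assoc, Units.mul_inv_cancel_left, Units.mul_inv, mul_one]) }
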